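/- Let B_1, …, B_n ∈ {-1, 1} and A_1, …, A_n ∈ {-1, 1}^p, and suppose 𝒜ᵀ𝒜 is positive definite. Let β̂ = (𝒜ᵀ𝒜)^{-1} 𝒜ᵀ ℬ be the least squares estimator. Then the following are equivalent: (1) ‖β̂‖_2 = 1; (2) β̂ is a vertex of the hypercube {x ∈ ℝ^{2^p} : ‖H_{2^p} x‖_∞ ≤ 1}, i.e., every entry of H_{2^p} β̂ equals 1 or -1; (3) B_i = β̂ᵀ A_i^⊗ for all 1 ≤ i ≤ n. -/

import Mathlib

/-- The Sylvester Hadamard matrix of size `2^p`, indexed by subsets of `{1, …, p}`. -/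
noncomputable def Had (p : ℕ) : Matrix (Finset (Fin p)) (Finset (Fin p)) ℝ :=
  Matrix.of fun S T => (-1 : ℝ) ^ (S ∩ T).card

lemma had_eq_prod {p : ℕ} (S U : Finset (Fin p)) :
    Had p S U = ∏ j ∈ U, (if j ∈ S then (-1:ℝ) else 1) := by
  rw [Finset.prod_ite, Finset.prod_const, Finset.prod_const, one_pow, mul_one,
    Finset.filter_mem_eq_inter]
  simp [Had, Finset.inter_comm]

lemma had_symm {p : ℕ} (S U : Finset (Fin p)) : Had p S U = Had p U S := by
  simp [Had, Finset.inter_comm]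

lemma sum_prod_powerset {p : ℕ} (g : Fin p → ℝ) :
    ∑ U : Finset (Fin p), ∏ j ∈ U, g j = ∏ j, (1 + g j) := by
  have := Finset.prod_add g (fun _ => (1:ℝ)) Finset.univ
  simp only [Finset.prod_const_one, mul_one, Finset.powerset_univ] at this
  rw [← this]
  exact Finset.prod_congr rfl fun j _ => by ring

lemma had_ortho {p : ℕ} (S S' : Finset (Fin p)) :
    ∑ U : Finset (Fin p), Had p S U * Had p S' U = if S = S' then (2:ℝ)^p else 0 := by
  have key : ∀ U, Had p S U * Had p S' U
      = ∏ j ∈ U, ((if j ∈ S then (-1:ℝ) else 1) * (if j ∈ S' then (-1:ℝ) else 1)) := by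
    intro U; rw [had_eq_prod, had_eq_prod, Finset.prod_mul_distrib]
  simp only [key]
  rw [sum_prod_powerset]
  by_cases h : S = S'
  · subst h
    rw [if_pos rfl]
    have h2 : ∀ j : Fin p, (1 + (if j ∈ S then (-1:ℝ) else 1) * (if j ∈ S then (-1:ℝ) else 1)) = 2 := by
      intro j; by_cases hj : j ∈ S <;> simp [hj] <;> norm_num
    rw [Finset.prod_congr rfl fun j _ => h2 j, Finset.prod_const]
    simp
  · rw [if_neg h]
    obtain ⟨j, hj⟩ : ∃ j, ¬(j ∈ S ↔ j ∈ S') := by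
      by_contra hc; push_neg at hc
      exact h (Finset.ext fun j => (hc j))
    apply Finset.prod_eq_zero (Finset.mem_univ j)
    by_cases h1 : j ∈ S <;> by_cases h2 : j ∈ S' <;> simp [h1, h2] at hj ⊢

lemma parseval {p : ℕ} (β : Finset (Fin p) → ℝ) :
    ∑ T : Finset (Fin p), ((Had p).mulVec β T) ^ 2
      = 2^p * ∑ S : Finset (Fin p), β S ^ 2 := by
  have step1 : ∀ T : Finset (Fin p), ((Had p).mulVec β T) ^ 2
      = ∑ S : Finset (Fin p), ∑ S' : Finset (Fin p),
          (β S * β S') * (Had p S T * Had p S' T) := by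
    intro T
    rw [Matrix.mulVec, dotProduct, sq, Finset.sum_mul_sum]
    refine Finset.sum_congr rfl fun S _ => Finset.sum_congr rfl fun S' _ => ?_
    rw [had_symm S T, had_symm S' T]; ring
  simp only [step1]
  rw [Finset.sum_comm]
  have step2 : ∀ S : Finset (Fin p),
      (∑ T : Finset (Fin p), ∑ S' : Finset (Fin p), (β S * β S') * (Had p S T * Had p S' T))
        = 2^p * β S ^ 2 := by
    intro S
    rw [Finset.sum_comm]
    have inner : ∀ S' : Finset (Fin p),
        (∑ T : Finset (Fin p), (β S * β S') * (Had p S T * Had p S' T))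
          = (β S * β S') * (if S = S' then (2:ℝ)^p else 0) := by
      intro S'
      rw [← Finset.mul_sum, had_ortho]
    simp only [inner, mul_ite, mul_zero]
    rw [Finset.sum_ite_eq]
    simp [sq]; ring
  simp only [step2]
  rw [Finset.mul_sum]

open scoped Matrix

/-- **Empirical perfect separation** (Theorem 12).
Let `B_1, …, B_n ∈ {-1,1}` and `A_1, …, A_n ∈ {-1,1}^p`, let `𝒜` be the `n × 2^p` design
matrix of power vectors `A_i^⊗`, and suppose `𝒜ᵀ𝒜` is positive definite.  Let
`β̂ = (𝒜ᵀ𝒜)⁻¹ 𝒜ᵀ ℬ` be the least squares estimator.  Then the following are equivalent: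
(1) `‖β̂‖₂ = 1`;
(2) `β̂` is a vertex of the hypercube `{x : ‖H_{2^p} x‖_∞ ≤ 1}`, i.e. every entry of
`H_{2^p} β̂` equals `1` or `-1`;
(3) `B_i = β̂ᵀ A_i^⊗` for all `1 ≤ i ≤ n`. -/
theorem empirical_perfect_separation_tfae
    {n p : ℕ} (Bv : Fin n → ℝ) (Av : Fin n → Fin p → ℝ)
    (hB : ∀ i, Bv i = -1 ∨ Bv i = 1)
    (hA : ∀ i j, Av i j = -1 ∨ Av i j = 1) :
    letI 𝒜 : Matrix (Fin n) (Finset (Fin p)) ℝ :=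
      Matrix.of fun i S => ∏ j ∈ S, Av i j
    ∀ _ : (𝒜.transpose * 𝒜).PosDef,
      letI βhat : Finset (Fin p) → ℝ :=
        ((𝒜.transpose * 𝒜)⁻¹ * 𝒜.transpose).mulVec Bv
      List.TFAE
        [ ∑ S : Finset (Fin p), βhat S ^ 2 = 1,
          ∀ S : Finset (Fin p),
            (Had p).mulVec βhat S = 1 ∨ (Had p).mulVec βhat S = -1,
          ∀ i : Fin n, Bv i = ∑ S : Finset (Fin p), βhat S * ∏ j ∈ S, Av i j ] := by
  intro hPD
  classical
  set 𝒜 : Matrix (Fin n) (Finset (Fin p)) ℝ :=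
    Matrix.of fun i S => ∏ j ∈ S, Av i j with h𝒜
  set βhat : Finset (Fin p) → ℝ :=
    ((𝒜.transpose * 𝒜)⁻¹ * 𝒜.transpose).mulVec Bv with hβ
  set v : Finset (Fin p) → ℝ := (Had p).mulVec βhat with hv
  set Ti : Fin n → Finset (Fin p) :=
    fun i => Finset.univ.filter (fun j => Av i j = -1) with hTi
  have hrow : ∀ i S, 𝒜 i S = Had p (Ti i) S := by
    intro i S
    show (∏ j ∈ S, Av i j) = _
    rw [had_eq_prod]
    refine Finset.prod_congr rfl fun j _ => ?_
    by_cases hj : j ∈ Ti i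
    · rw [if_pos hj]
      simpa [hTi] using hj
    · rw [if_neg hj]
      rcases hA i j with h | h
      · exact absurd (by simp [hTi, h]) hj
      · exact h
  have hfit : ∀ i, (𝒜 *ᵥ βhat) i = v (Ti i) := by
    intro i
    simp only [hv, Matrix.mulVec, dotProduct]
    exact Finset.sum_congr rfl fun S _ => by rw [hrow]
  have hdet : IsUnit (𝒜.transpose * 𝒜).det := hPD.det_pos.ne'.isUnit
  have hnormal : (𝒜.transpose * 𝒜) *ᵥ βhat = 𝒜.transpose *ᵥ Bv := by
    rw [hβ, Matrix.mulVec_mulVec, ← Matrix.mul_assoc, Matrix.mul_nonsing_inv _ hdet,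
      Matrix.one_mul]
  have hS0 : ∀ S, ∑ i, Had p (Ti i) S * (Bv i - v (Ti i)) = 0 := by
    intro S
    have h1 := congrFun hnormal S
    rw [← Matrix.mulVec_mulVec] at h1
    simp only [Matrix.mulVec, dotProduct, Matrix.transpose_apply] at h1
    have h3 : ∀ i, Had p (Ti i) S * (Bv i - v (Ti i))
        = 𝒜 i S * Bv i - 𝒜 i S * (𝒜 *ᵥ βhat) i := by
      intro i; rw [hrow, hfit]; ring
    rw [Finset.sum_congr rfl fun i _ => h3 i, Finset.sum_sub_distrib]
    rw [show ∑ i, 𝒜 i S * (𝒜 *ᵥ βhat) i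
        = ∑ i, 𝒜 i S * ∑ S', 𝒜 i S' * βhat S' from rfl] at *
    rw [h1, sub_self]
  have hcell : ∀ T : Finset (Fin p),
      ∑ i ∈ Finset.univ.filter (fun i => Ti i = T), Bv i
        = ((Finset.univ.filter (fun i => Ti i = T)).card : ℝ) * v T := by
    intro T
    have key : (0:ℝ)
        = (∑ i ∈ Finset.univ.filter (fun i => Ti i = T), (Bv i - v T)) * 2^p := by
      calc (0:ℝ) = ∑ S : Finset (Fin p), Had p T S *
            ∑ i, Had p (Ti i) S * (Bv i - v (Ti i)) := by simp [hS0]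
        _ = ∑ i, ∑ S : Finset (Fin p),
              Had p T S * (Had p (Ti i) S * (Bv i - v (Ti i))) := by
            simp_rw [Finset.mul_sum]; exact Finset.sum_comm
        _ = ∑ i, (Bv i - v (Ti i)) * ∑ S : Finset (Fin p), Had p (Ti i) S * Had p T S := by
            refine Finset.sum_congr rfl fun i _ => ?_
            rw [Finset.mul_sum]
            exact Finset.sum_congr rfl fun S _ => by ring
        _ = ∑ i, (Bv i - v (Ti i)) * (if Ti i = T then (2:ℝ)^p else 0) := by
            simp_rw [had_ortho]
        _ = ∑ i ∈ Finset.univ.filter (fun i => Ti i = T), (Bv i - v T) * 2^p := by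
            rw [Finset.sum_filter]
            refine Finset.sum_congr rfl fun i _ => ?_
            by_cases h : Ti i = T
            · rw [if_pos h, if_pos h, h]
            · rw [if_neg h, if_neg h, mul_zero]
        _ = (∑ i ∈ Finset.univ.filter (fun i => Ti i = T), (Bv i - v T)) * 2^p := by
            rw [Finset.sum_mul]
    have h2p : (2:ℝ)^p ≠ 0 := by positivity
    have hz : ∑ i ∈ Finset.univ.filter (fun i => Ti i = T), (Bv i - v T) = 0 := by
      rcases mul_eq_zero.mp key.symm with h | h
      · exact h
      · exact absurd h h2p
    rw [Finset.sum_sub_distrib, Finset.sum_const, nsmul_eq_mul, sub_eq_zero] at hz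
    exact hz
  have hsurj : ∀ T : Finset (Fin p), ∃ i, Ti i = T := by
    intro T
    by_contra hc
    push_neg at hc
    set x : Finset (Fin p) → ℝ := fun S => Had p T S with hx'
    have hx : x ≠ 0 := by
      intro h0
      have h1 := congrFun h0 ∅
      simp [hx', Had] at h1
    have hAx : 𝒜 *ᵥ x = 0 := by
      funext i
      simp only [Matrix.mulVec, dotProduct, hx', Pi.zero_apply]
      rw [Finset.sum_congr rfl fun S _ => by rw [hrow i S]]
      rw [had_ortho (Ti i) T, if_neg (hc i)]
    have hpos := hPD.dotProduct_mulVec_pos hx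
    rw [← Matrix.mulVec_mulVec, hAx, Matrix.mulVec_zero, dotProduct_zero] at hpos
    exact lt_irrefl 0 hpos
  -- cell bound: v T ^ 2 ≤ 1
  have hvle : ∀ T : Finset (Fin p), v T ^ 2 ≤ 1 := by
    intro T
    obtain ⟨i0, hi0⟩ := hsurj T
    set c := Finset.univ.filter (fun i => Ti i = T) with hc
    have hm : 0 < (c.card : ℝ) := by
      have : i0 ∈ c := by simp [hc, hi0]
      exact_mod_cast Finset.card_pos.mpr ⟨i0, this⟩
    have habs : |(c.card : ℝ) * v T| ≤ (c.card : ℝ) := by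
      rw [← hcell T]
      calc |∑ i ∈ c, Bv i| ≤ ∑ i ∈ c, |Bv i| := Finset.abs_sum_le_sum_abs _ _
        _ = ∑ i ∈ c, 1 := Finset.sum_congr rfl fun i _ => by
              rcases hB i with h | h <;> rw [h] <;> norm_num
        _ = (c.card : ℝ) := by rw [Finset.sum_const, nsmul_eq_mul, mul_one]
    rw [abs_mul, abs_of_pos hm] at habs
    have hv1 : |v T| ≤ 1 := by
      by_contra hgt
      push_neg at hgt
      nlinarith [mul_lt_mul_of_pos_left hgt hm]
    calc v T ^ 2 = |v T| ^ 2 := (sq_abs _).symm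
      _ ≤ 1 := by nlinarith [hv1, abs_nonneg (v T)]
  have hcard : (Finset.univ : Finset (Finset (Fin p))).card = 2^p := by
    simp [Finset.card_univ]
  -- (2) → (3)
  tfae_have 2 → 3 := by
    intro h2 i
    have hRHS : ∑ S : Finset (Fin p), βhat S * ∏ j ∈ S, Av i j = v (Ti i) := by
      rw [← hfit i]
      simp only [Matrix.mulVec, dotProduct]
      refine Finset.sum_congr rfl fun S _ => ?_
      rw [show 𝒜 i S = ∏ j ∈ S, Av i j from rfl]; ring
    rw [hRHS]
    set T := Ti i with hT
    have hv2 : v T ^ 2 = 1 := by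
      rcases h2 T with h | h <;> rw [h] <;> norm_num
    set c := Finset.univ.filter (fun i => Ti i = T) with hc
    have hsumsq : ∑ j ∈ c, (Bv j - v T) ^ 2 = 0 := by
      have hexp : ∀ j ∈ c, (Bv j - v T) ^ 2 = 1 - 2 * v T * Bv j + v T ^ 2 := by
        intro j _
        have : Bv j ^ 2 = 1 := by rcases hB j with h | h <;> rw [h] <;> norm_num
        linear_combination this
      rw [Finset.sum_congr rfl hexp]
      rw [Finset.sum_add_distrib, Finset.sum_sub_distrib, Finset.sum_const,
        ← Finset.mul_sum, hcell T, Finset.sum_const]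
      push_cast
      linear_combination (-((Finset.univ.filter (fun i => Ti i = T)).card : ℝ)) * hv2
    have hmem : i ∈ c := by simp [hc, hT]
    have := (Finset.sum_eq_zero_iff_of_nonneg
      (fun j _ => sq_nonneg (Bv j - v T))).mp hsumsq i hmem
    have : Bv i - v T = 0 := by
      exact pow_eq_zero_iff (by norm_num) |>.mp this
    linarith
  -- (3) → (2)
  tfae_have 3 → 2 := by
    intro h3 S
    obtain ⟨i, hi⟩ := hsurj S
    have hRHS : ∑ S' : Finset (Fin p), βhat S' * ∏ j ∈ S', Av i j = v (Ti i) := by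
      rw [← hfit i]
      simp only [Matrix.mulVec, dotProduct]
      refine Finset.sum_congr rfl fun S' _ => ?_
      rw [show 𝒜 i S' = ∏ j ∈ S', Av i j from rfl]; ring
    have hBi : Bv i = v S := by rw [h3 i, hRHS, hi]
    rcases hB i with h | h
    · right; rw [← hBi, h]
    · left; rw [← hBi, h]
  -- (2) → (1)
  tfae_have 2 → 1 := by
    intro h2
    have hP := parseval βhat
    have hsum : ∑ T : Finset (Fin p), v T ^ 2 = 2^p := by
      rw [Finset.sum_congr rfl fun T _ => show v T ^ 2 = 1 by
        rcases h2 T with h | h <;> rw [h] <;> norm_num]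
      rw [Finset.sum_const, hcard, nsmul_eq_mul, mul_one]
      push_cast; ring
    have h2p : (2:ℝ)^p ≠ 0 := by positivity
    have : (2:ℝ)^p * ∑ S : Finset (Fin p), βhat S ^ 2 = 2^p * 1 := by
      rw [← hP, mul_one]
      exact hsum
    exact mul_left_cancel₀ h2p this
  -- (1) → (2)
  tfae_have 1 → 2 := by
    intro h1 S
    have hP := parseval βhat
    have hsum : ∑ T : Finset (Fin p), v T ^ 2 = 2^p := by
      rw [hv]
      rw [hP, h1, mul_one]
    have hall : v S ^ 2 = 1 := by
      by_contra hne
      have hlt : v S ^ 2 < 1 := lt_of_le_of_ne (hvle S) hne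
      have : ∑ T : Finset (Fin p), v T ^ 2 < ∑ _T : Finset (Fin p), (1:ℝ) :=
        Finset.sum_lt_sum (fun T _ => hvle T) ⟨S, Finset.mem_univ S, hlt⟩
      rw [hsum, Finset.sum_const, hcard, nsmul_eq_mul, mul_one] at this
      have h2 : ((2:ℝ))^p = ((2^p : ℕ) : ℝ) := by push_cast; ring
      rw [← h2] at this
      exact lt_irrefl _ this
    have h' : (v S - 1) * (v S + 1) = 0 := by linear_combination hall
    rcases mul_eq_zero.mp h' with h | h
    · left; linarith
    · right; linarith
  tfae_finish
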